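/- arXiv:1611.10083 — 2 statements merged into one kernel-verified Lean document; each statement's English description precedes it below -/
import Mathlib

section
/- The characteristic polynomial of the matrix B factors as (X − γh₁u)·(X² − 2(h₁+h₂)uX + h₁(h₁+h₂)u²). Consequently, if h₂(h₁+h₂) ≥ 0, then the eigenvalues of B are σ₁ = γh₁u, σ₂ = (h₁ + h₂ − √(h₂(h₁+h₂)))u and σ₃ = (h₁ + h₂ + √(h₂(h₁+h₂)))u. -/
open Polynomial Matrix

/-- The matrix `G_U` of the linearized source term of the compressible Euler
equations with geometric coefficient `h₁` and friction coefficient `h₂`,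
evaluated at a state with velocity `u` and total specific enthalpy `H`. -/
noncomputable def sourceJacobian (γ u H h₁ h₂ : ℝ) : Matrix (Fin 3) (Fin 3) ℝ :=
  !![0, h₁, 0;
     -(h₁ + h₂) * u ^ 2, 2 * (h₁ + h₂) * u, 0;
     h₁ * ((γ - 1) * u ^ 3 / 2 - u * H) - 2 * h₂ * u ^ 3,
       h₁ * (H - (γ - 1) * u ^ 2) + 3 * h₂ * u ^ 2, γ * h₁ * u]

/-- The characteristic polynomial of the linearized source matrix `B` factors as
`(X − γh₁u)(X² − 2(h₁+h₂)uX + h₁(h₁+h₂)u²)`; consequently, if `h₂(h₁+h₂) ≥ 0`,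
the eigenvalues of `B` are `σ₁ = γh₁u`, `σ₂ = (h₁+h₂−√(h₂(h₁+h₂)))u` and
`σ₃ = (h₁+h₂+√(h₂(h₁+h₂)))u`. -/
theorem sourceJacobian_charpoly (γ u H h₁ h₂ : ℝ) :
    (sourceJacobian γ u H h₁ h₂).charpoly =
      (X - C (γ * h₁ * u)) *
        (X ^ 2 - C (2 * (h₁ + h₂) * u) * X + C (h₁ * (h₁ + h₂) * u ^ 2)) ∧
    (h₂ * (h₁ + h₂) ≥ 0 →
      (sourceJacobian γ u H h₁ h₂).charpoly =
        (X - C (γ * h₁ * u)) *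
          (X - C ((h₁ + h₂ - Real.sqrt (h₂ * (h₁ + h₂))) * u)) *
          (X - C ((h₁ + h₂ + Real.sqrt (h₂ * (h₁ + h₂))) * u))) := by
  have key : (sourceJacobian γ u H h₁ h₂).charpoly =
      (X - C (γ * h₁ * u)) *
        (X ^ 2 - C (2 * (h₁ + h₂) * u) * X + C (h₁ * (h₁ + h₂) * u ^ 2)) := by
    rw [Matrix.charpoly, Matrix.det_fin_three]
    apply Polynomial.funext
    intro x
    simp [charmatrix_apply, Matrix.diagonal_apply, sourceJacobian, Fin.ext_iff]
    ring
  refine ⟨key, fun h => ?_⟩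
  have hs : Real.sqrt (h₂ * (h₁ + h₂)) ^ 2 = h₂ * (h₁ + h₂) := Real.sq_sqrt h
  have fac : (X ^ 2 - C (2 * (h₁ + h₂) * u) * X + C (h₁ * (h₁ + h₂) * u ^ 2) : ℝ[X]) =
      (X - C ((h₁ + h₂ - Real.sqrt (h₂ * (h₁ + h₂))) * u)) *
      (X - C ((h₁ + h₂ + Real.sqrt (h₂ * (h₁ + h₂))) * u)) := by
    apply Polynomial.funext
    intro x
    simp only [eval_add, eval_sub, eval_mul, eval_pow, eval_X, eval_C]
    linear_combination u ^ 2 * hs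
  rw [key, fac, ← mul_assoc]
end

section
/- Assume h₂(h₁+h₂) > 0, set D = √(h₂(h₁+h₂)), σ₂ = (h₁+h₂−D)u, σ₃ = (h₁+h₂+D)u and m = ρu, and define for t ∈ ℝ the functions X₁(t) = ((e^{σ₂t}+e^{σ₃t})/2 + ((e^{σ₂t}−e^{σ₃t})/2)·D/(h₁+h₂) − 1)·ρ and X₂(t) = ((e^{σ₂t}+e^{σ₃t})/2 − 1)·m. Then X₁(0) = X₂(0) = 0 and for every t ∈ ℝ: X₁′(t) = h₁·X₂(t) + h₁m and X₂′(t) = −(h₁+h₂)u²·X₁(t) + 2(h₁+h₂)u·X₂(t) + (h₁+h₂)ρu². In other words, (X₁, X₂) is the solution with zero initial data of the linear ODE system Ẋ = M X + C with M = [[0, h₁], [−(h₁+h₂)u², 2(h₁+h₂)u]] and C = (h₁m, (h₁+h₂)ρu²)ᵀ. -/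
/-- The explicit functions
`X₁(t) = ((e^{σ₂t}+e^{σ₃t})/2 + ((e^{σ₂t}−e^{σ₃t})/2)·D/(h₁+h₂) − 1)·ρ` and
`X₂(t) = ((e^{σ₂t}+e^{σ₃t})/2 − 1)·m` solve, with zero initial data, the linear
ODE system `Ẋ = M X + C` with `M = [[0, h₁], [−(h₁+h₂)u², 2(h₁+h₂)u]]` and
`C = (h₁m, (h₁+h₂)ρu²)ᵀ`, the density–momentum block of the operator-splitting
equation in the construction of approximate generalized Riemann solutions. -/
theorem perturbation_solves_ode (ρ u h₁ h₂ D σ₂ σ₃ m : ℝ)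
    (hpos : h₂ * (h₁ + h₂) > 0)
    (hD : D = Real.sqrt (h₂ * (h₁ + h₂)))
    (hσ₂ : σ₂ = (h₁ + h₂ - D) * u)
    (hσ₃ : σ₃ = (h₁ + h₂ + D) * u)
    (hm : m = ρ * u)
    (X₁ X₂ : ℝ → ℝ)
    (hX₁ : ∀ t, X₁ t =
      ((Real.exp (σ₂ * t) + Real.exp (σ₃ * t)) / 2 +
        (Real.exp (σ₂ * t) - Real.exp (σ₃ * t)) / 2 * (D / (h₁ + h₂)) - 1) * ρ)
    (hX₂ : ∀ t, X₂ t = ((Real.exp (σ₂ * t) + Real.exp (σ₃ * t)) / 2 - 1) * m) :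
    X₁ 0 = 0 ∧ X₂ 0 = 0 ∧
      ∀ t : ℝ,
        HasDerivAt X₁ (h₁ * X₂ t + h₁ * m) t ∧
        HasDerivAt X₂
          (-(h₁ + h₂) * u ^ 2 * X₁ t + 2 * (h₁ + h₂) * u * X₂ t +
            (h₁ + h₂) * ρ * u ^ 2) t := by
  have hne : h₁ + h₂ ≠ 0 := by
    intro h
    rw [h, mul_zero] at hpos
    exact lt_irrefl 0 hpos
  have hD2 : D ^ 2 = h₂ * (h₁ + h₂) := by
    rw [hD, sq, Real.mul_self_sqrt hpos.le]
  subst hσ₂ hσ₃ hm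
  have hX₁f : X₁ = fun t => ((Real.exp ((h₁ + h₂ - D) * u * t) + Real.exp ((h₁ + h₂ + D) * u * t)) / 2 +
        (Real.exp ((h₁ + h₂ - D) * u * t) - Real.exp ((h₁ + h₂ + D) * u * t)) / 2 * (D / (h₁ + h₂)) - 1) * ρ := funext hX₁
  have hX₂f : X₂ = fun t => ((Real.exp ((h₁ + h₂ - D) * u * t) + Real.exp ((h₁ + h₂ + D) * u * t)) / 2 - 1) * (ρ * u) := funext hX₂
  subst hX₁f hX₂f
  refine ⟨by simp, by simp, fun t => ?_⟩
  have he₂ : HasDerivAt (fun t : ℝ => Real.exp ((h₁ + h₂ - D) * u * t))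
      ((h₁ + h₂ - D) * u * Real.exp ((h₁ + h₂ - D) * u * t)) t := by
    simpa [mul_comm] using ((hasDerivAt_id t).const_mul ((h₁ + h₂ - D) * u)).exp
  have he₃ : HasDerivAt (fun t : ℝ => Real.exp ((h₁ + h₂ + D) * u * t))
      ((h₁ + h₂ + D) * u * Real.exp ((h₁ + h₂ + D) * u * t)) t := by
    simpa [mul_comm] using ((hasDerivAt_id t).const_mul ((h₁ + h₂ + D) * u)).exp
  constructor
  · have h := ((((he₂.add he₃).div_const 2).add
      (((he₂.sub he₃).div_const 2).mul_const (D / (h₁ + h₂)))).sub_const 1).mul_const ρ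
    refine h.congr_deriv (Eq.symm ?_)
    field_simp
    linear_combination (ρ * u * (Real.exp ((h₁ + h₂ - D) * u * t) +
      Real.exp (u * t * (h₁ + h₂ + D)))) * hD2
  · have h := (((he₂.add he₃).div_const 2).sub_const 1).mul_const (ρ * u)
    refine h.congr_deriv (Eq.symm ?_)
    field_simp
    ring
end
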